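/- Let L : List Bool be a Boolean string of length m, let n < m, and let e(n,m) = List.replicate n false ++ [true] ++ List.replicate (m − 1 − n) false be the length-m string with a single one at position n. If the character of L at position n is false, then the Levenshtein edit distance with unit costs between L and e(n,m) is at least L.count true. (Together with the previous fact this shows that comparing the two distances determines the bit of L at position n.) -/

import Mathlib

structure Levenshtein.Cost (α β δ : Type*) where
  delete : α → δ
  insert : β → δ
  substitute : α → β → δ

def Levenshtein.defaultCost {α : Type*} [DecidableEq α] : Levenshtein.Cost α α ℕ where
  delete _ := 1
  insert _ := 1
  substitute a b := if a = b then 0 else 1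

def Levenshtein.impl {α β δ : Type*} [AddZeroClass δ] [Min δ]
    (C : Levenshtein.Cost α β δ)
    (xs : List α) (y : β) (d : {r : List δ // 0 < r.length}) :
    {r : List δ // 0 < r.length} :=
  let ⟨ds, w⟩ := d
  xs.zip (ds.zip ds.tail) |>.foldr
    (init := ⟨[ds.getLast (List.length_pos_iff_ne_nil.mp w) + C.insert y], by simp⟩)
    (fun ⟨x, d₀, d₁⟩ ⟨r, w⟩ =>
      ⟨min (C.delete x + r[0]) (min (C.insert y + d₀) (C.substitute x y + d₁)) :: r, by simp⟩)

def suffixLevenshtein {α β δ : Type*} [AddZeroClass δ] [Min δ]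
    (C : Levenshtein.Cost α β δ) (xs : List α) (ys : List β) :
    {r : List δ // 0 < r.length} :=
  ys.foldr
    (Levenshtein.impl C xs)
    (xs.foldr (init := ⟨[0], by simp⟩) (fun a ⟨r, w⟩ => ⟨(C.delete a + r[0]) :: r, by simp⟩))

def levenshtein {α β δ : Type*} [AddZeroClass δ] [Min δ]
    (C : Levenshtein.Cost α β δ) (xs : List α) (ys : List β) : δ :=
  let ⟨r, w⟩ := suffixLevenshtein C xs ys
  r[0]


private def hd {δ : Type*} (r : {r : List δ // 0 < r.length}) : δ := r.1[0]'r.2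

private lemma lev_eq_hd {α β : Type*} (c : Levenshtein.Cost α β ℕ) (xs : List α) (ys : List β) :
    levenshtein c xs ys = hd (suffixLevenshtein c xs ys) := rfl

private lemma impl_cons_eq' {α β : Type*} (c : Levenshtein.Cost α β ℕ) (x : α) (xs : List α)
    (y : β) (d : {r : List ℕ // 0 < r.length}) {a d' : ℕ} {ds : List ℕ}
    (h : d.1 = a :: d' :: ds) :
    Levenshtein.impl c (x :: xs) y d =
      ⟨min (c.delete x + hd (Levenshtein.impl c xs y ⟨d' :: ds, by simp⟩))
        (min (c.insert y + a) (c.substitute x y + d')) ::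
        (Levenshtein.impl c xs y ⟨d' :: ds, by simp⟩).1, by simp⟩ := by
  obtain ⟨l, hl⟩ := d
  dsimp only at h
  subst h
  rfl

private lemma impl_length' {α β : Type*} (c : Levenshtein.Cost α β ℕ) (y : β) :
    ∀ (xs : List α) (d : {r : List ℕ // 0 < r.length}), d.1.length = xs.length + 1 →
      (Levenshtein.impl c xs y d).1.length = xs.length + 1
  | [], _, _ => rfl
  | _ :: _, ⟨[], h⟩, _ => by simp at h
  | _ :: _, ⟨[_], _⟩, w => by simp at w
  | x :: xs, ⟨d₁ :: d₂ :: ds, _⟩, w => by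
    have := impl_length' c y xs ⟨d₂ :: ds, by simp⟩ (by simpa using w)
    rw [impl_cons_eq' c x xs y _ rfl]
    simpa using this

private lemma suffix_nil_cons {α β : Type*} (c : Levenshtein.Cost α β ℕ) (x : α) (xs : List α) :
    suffixLevenshtein c (x :: xs) ([] : List β) =
      ⟨(c.delete x + hd (suffixLevenshtein c xs ([] : List β))) ::
        (suffixLevenshtein c xs ([] : List β)).1, by simp⟩ := rfl

private lemma suffix_length {α β : Type*} (c : Levenshtein.Cost α β ℕ) (xs : List α) :
    ∀ (ys : List β), (suffixLevenshtein c xs ys).1.length = xs.length + 1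
  | [] => by
    induction xs with
    | nil => rfl
    | cons x xs ih => rw [suffix_nil_cons]; simpa using ih
  | y :: ys => impl_length' c y xs _ (suffix_length c xs ys)

private lemma suffix_cons₁ {α β : Type*} (c : Levenshtein.Cost α β ℕ) (x : α) (xs : List α) :
    ∀ (ys : List β), suffixLevenshtein c (x :: xs) ys =
      ⟨levenshtein c (x :: xs) ys :: (suffixLevenshtein c xs ys).1, by simp⟩
  | [] => rfl
  | y :: ys => by
    obtain ⟨d', ds', hS⟩ : ∃ d' ds', (suffixLevenshtein c xs ys).1 = d' :: ds' := by
      rcases hh : (suffixLevenshtein c xs ys).1 with _ | ⟨d', ds'⟩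
      · have := suffix_length c xs ys; simp [hh] at this
      · exact ⟨_, _, rfl⟩
    have hS' : suffixLevenshtein c xs ys = ⟨d' :: ds', by simp⟩ := Subtype.ext hS
    have h1 : (suffixLevenshtein c (x :: xs) ys).1 = levenshtein c (x :: xs) ys :: d' :: ds' := by
      rw [suffix_cons₁ c x xs ys, hS]
    have E : suffixLevenshtein c (x :: xs) (y :: ys) =
        Levenshtein.impl c (x :: xs) y (suffixLevenshtein c (x :: xs) ys) := rfl
    rw [impl_cons_eq' c x xs y _ h1] at E
    have E2 : suffixLevenshtein c xs (y :: ys) = Levenshtein.impl c xs y ⟨d' :: ds', by simp⟩ := by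
      rw [← hS']; rfl
    apply Subtype.ext
    rw [lev_eq_hd c (x :: xs) (y :: ys), E, E2]
    rfl

@[simp]
theorem levenshtein_nil_nil {α β : Type*} (c : Levenshtein.Cost α β ℕ) :
    levenshtein c ([] : List α) ([] : List β) = 0 := rfl

theorem levenshtein_cons_nil {α β : Type*} (c : Levenshtein.Cost α β ℕ) (x : α) (xs : List α) :
    levenshtein c (x :: xs) ([] : List β) = c.delete x + levenshtein c xs ([] : List β) := rfl

theorem levenshtein_nil_cons {α β : Type*} (c : Levenshtein.Cost α β ℕ) (y : β) (ys : List β) :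
    levenshtein c ([] : List α) (y :: ys) = c.insert y + levenshtein c ([] : List α) ys := by
  obtain ⟨a, hS⟩ : ∃ a, (suffixLevenshtein c ([] : List α) ys).1 = [a] := by
    have := suffix_length c ([] : List α) ys
    rcases hh : (suffixLevenshtein c ([] : List α) ys).1 with _ | ⟨a, _ | ⟨b, l⟩⟩
    · simp [hh] at this
    · exact ⟨_, rfl⟩
    · simp [hh] at this
  have hS' : suffixLevenshtein c ([] : List α) ys = ⟨[a], by simp⟩ := Subtype.ext hS
  rw [lev_eq_hd c [] (y :: ys), lev_eq_hd c [] ys,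
    show suffixLevenshtein c ([] : List α) (y :: ys) =
      Levenshtein.impl c [] y (suffixLevenshtein c [] ys) from rfl, hS']
  show a + c.insert y = c.insert y + a
  omega

theorem levenshtein_cons_cons {α β : Type*} (c : Levenshtein.Cost α β ℕ) (x : α) (xs : List α)
    (y : β) (ys : List β) :
    levenshtein c (x :: xs) (y :: ys) =
      min (c.delete x + levenshtein c xs (y :: ys))
        (min (c.insert y + levenshtein c (x :: xs) ys) (c.substitute x y + levenshtein c xs ys)) := by
  obtain ⟨d', ds', hS⟩ : ∃ d' ds', (suffixLevenshtein c xs ys).1 = d' :: ds' := by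
    rcases hh : (suffixLevenshtein c xs ys).1 with _ | ⟨d', ds'⟩
    · have := suffix_length c xs ys; simp [hh] at this
    · exact ⟨_, _, rfl⟩
  have hS' : suffixLevenshtein c xs ys = ⟨d' :: ds', by simp⟩ := Subtype.ext hS
  have h1 : (suffixLevenshtein c (x :: xs) ys).1 = levenshtein c (x :: xs) ys :: d' :: ds' := by
    rw [suffix_cons₁ c x xs ys, hS]
  rw [lev_eq_hd c (x :: xs) (y :: ys),
    show suffixLevenshtein c (x :: xs) (y :: ys) =
      Levenshtein.impl c (x :: xs) y (suffixLevenshtein c (x :: xs) ys) from rfl,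
    impl_cons_eq' c x xs y _ h1, lev_eq_hd c xs (y :: ys),
    show suffixLevenshtein c xs (y :: ys) =
      Levenshtein.impl c xs y (suffixLevenshtein c xs ys) from rfl, lev_eq_hd c xs ys, hS']
  rfl

local notation "C" => (Levenshtein.defaultCost : Levenshtein.Cost Bool Bool ℕ)

private lemma cdel (a : Bool) : (C).delete a = 1 := rfl
private lemma cins (a : Bool) : (C).insert a = 1 := rfl
private lemma csubff : (C).substitute false false = 0 := rfl
private lemma csubtt : (C).substitute true true = 0 := rfl
private lemma csubft : (C).substitute false true = 1 := rfl
private lemma csubtf : (C).substitute true false = 1 := rfl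

private lemma count_cons_t (s : List Bool) :
    (true :: s).count true = s.count true + 1 := by simp [List.count_cons]
private lemma count_cons_f (s : List Bool) :
    (false :: s).count true = s.count true := by simp [List.count_cons]

private lemma le_min_add {x y t g : ℕ} (h1 : g ≤ x + t) (h2 : g ≤ y + t) :
    g ≤ min x y + t := by
  rcases le_total x y with h | h
  · rwa [min_eq_left h]
  · rwa [min_eq_right h]

/-- All-zero target: distance ≥ count of trues. -/
theorem lemA : ∀ (L : List Bool) (j : ℕ),
    L.count true ≤ levenshtein C L (List.replicate j false)
  | [], _ => by simp
  | a :: s, 0 => by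
    have h1 := lemA s 0
    rw [List.replicate_zero] at h1 ⊢
    cases a <;>
      (simp only [levenshtein_cons_nil, cdel, count_cons_t, count_cons_f] at *; omega)
  | a :: s, j+1 => by
    have h1 := lemA s (j+1)
    have h2 := lemA (a :: s) j
    have h3 := lemA s j
    rw [List.replicate_succ] at h1 ⊢
    cases a <;>
      (simp only [levenshtein_cons_cons, cdel, cins, csubff, csubtt, csubft, csubtf, count_cons_t, count_cons_f] at *;
       refine le_min ?_ (le_min ?_ ?_) <;> omega)
  termination_by L j => (L.length, j)

/-- All-zero target: distance ≥ count of trues plus length deficit. -/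
theorem lemA' : ∀ (L : List Bool) (j : ℕ),
    L.count true + j ≤ levenshtein C L (List.replicate j false) + L.length
  | [], 0 => by simp
  | [], j+1 => by
    have h1 := lemA' [] j
    rw [List.replicate_succ]
    simp only [levenshtein_nil_cons, cins, List.count_nil, List.length_nil] at *
    omega
  | a :: s, 0 => by
    have h1 := lemA' s 0
    rw [List.replicate_zero] at h1 ⊢
    cases a <;>
      (simp only [levenshtein_cons_nil, cdel, count_cons_t, count_cons_f,
         List.length_cons] at *; omega)
  | a :: s, j+1 => by
    have h1 := lemA' s (j+1)
    have h2 := lemA' (a :: s) j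
    have h3 := lemA' s j
    rw [List.replicate_succ] at h1 ⊢
    cases a <;>
      (simp only [levenshtein_cons_cons, cdel, cins, csubff, csubtt, csubft, csubtf, count_cons_t, count_cons_f,
         List.length_cons] at *;
       refine le_min_add ?_ (le_min_add ?_ ?_) <;> omega)
  termination_by L j => (L.length, j)

/-- Single-one target: distance ≥ count of trues minus one. -/
theorem lemC : ∀ (L : List Bool) (n j : ℕ),
    L.count true ≤
      levenshtein C L (List.replicate n false ++ true :: List.replicate j false) + 1
  | [], _, _ => by simp
  | a :: s, 0, j => by
    have h1 := lemC s 0 j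
    have h2 := lemA (a :: s) j
    have h3 := lemA' s j
    have h4 := lemA s j
    rw [List.replicate_zero, List.nil_append] at h1 ⊢
    cases a <;>
      (simp only [levenshtein_cons_cons, cdel, cins, csubff, csubtt, csubft, csubtf, count_cons_t, count_cons_f] at *;
       refine le_min_add ?_ (le_min_add ?_ ?_) <;> omega)
  | a :: s, k+1, j => by
    have h1 := lemC s (k+1) j
    have h2 := lemC (a :: s) k j
    have h3 := lemC s k j
    rw [List.replicate_succ, List.cons_append] at h1 ⊢
    cases a <;>
      (simp only [levenshtein_cons_cons, cdel, cins, csubff, csubtt, csubft, csubtf, count_cons_t, count_cons_f] at *;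
       refine le_min_add ?_ (le_min_add ?_ ?_) <;> omega)
  termination_by L n _ => (L.length, n)

private lemma lev_nil_e (n j : ℕ) :
    levenshtein C []
      (List.replicate n false ++ true :: List.replicate j false) = n + 1 + j := by
  induction n with
  | zero =>
    rw [List.replicate_zero, List.nil_append]
    simp only [levenshtein_nil_cons, cins]
    induction j with
    | zero => simp
    | succ k ihj =>
      rw [List.replicate_succ]
      simp only [levenshtein_nil_cons, cins] at *
      omega
  | succ k ihn =>
    rw [List.replicate_succ, List.cons_append]
    simp only [levenshtein_nil_cons, cins] at *
    omega

/-- Single-one target: distance ≥ count of trues minus one plus length deficit. -/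
theorem lemD : ∀ (L : List Bool) (n j : ℕ),
    L.count true + n + j ≤
      levenshtein C L (List.replicate n false ++ true :: List.replicate j false) + L.length
  | [], n, j => by simp [lev_nil_e]
  | a :: s, 0, j => by
    have h1 := lemD s 0 j
    have h2 := lemA' (a :: s) j
    have h3 := lemA' s j
    rw [List.replicate_zero, List.nil_append] at h1 ⊢
    cases a <;>
      (simp only [levenshtein_cons_cons, cdel, cins, csubff, csubtt, csubft, csubtf, count_cons_t, count_cons_f,
         List.length_cons] at *;
       refine le_min_add ?_ (le_min_add ?_ ?_) <;> omega)
  | a :: s, k+1, j => by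
    have h1 := lemD s (k+1) j
    have h2 := lemD (a :: s) k j
    have h3 := lemD s k j
    rw [List.replicate_succ, List.cons_append] at h1 ⊢
    cases a <;>
      (simp only [levenshtein_cons_cons, cdel, cins, csubff, csubtt, csubft, csubtf, count_cons_t, count_cons_f,
         List.length_cons] at *;
       refine le_min_add ?_ (le_min_add ?_ ?_) <;> omega)
  termination_by L n _ => (L.length, n)

/-- Main bound: equal lengths and a `false` at position `n`. -/
theorem lemB (L : List Bool) (n j : ℕ) (hlen : L.length = n + 1 + j)
    (hfalse : L[n]? = some false) :
    L.count true ≤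
      levenshtein C L (List.replicate n false ++ true :: List.replicate j false) := by
  induction L generalizing n with
  | nil => simp only [List.length_nil] at hlen; omega
  | cons a s ih =>
    cases n with
    | zero =>
      obtain rfl : a = false := by simpa using hfalse
      have h1 := lemD s 0 j
      have h2 := lemA (false :: s) j
      have h3 := lemA' s j
      simp only [List.length_cons] at hlen
      rw [List.replicate_zero, List.nil_append] at h1 ⊢
      simp only [levenshtein_cons_cons, cdel, cins, csubff, csubtt, csubft, csubtf, count_cons_t, count_cons_f,
        List.length_cons] at *
      refine le_min ?_ (le_min ?_ ?_) <;> omega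
    | succ k =>
      simp only [List.getElem?_cons_succ] at hfalse
      have h1 := lemD s (k+1) j
      have h2 := lemC (a :: s) k j
      have h3 := ih k (by simp only [List.length_cons] at hlen; omega) hfalse
      simp only [List.length_cons] at hlen
      rw [List.replicate_succ, List.cons_append] at h1 ⊢
      cases a <;>
        (simp only [levenshtein_cons_cons, cdel, cins, csubff, csubtt, csubft, csubtf, count_cons_t, count_cons_f,
           List.length_cons] at *;
         refine le_min ?_ (le_min ?_ ?_) <;> omega)

/-- If `L` has length `m`, `n < m` and the character of `L` at position `n` is
`false`, then the Levenshtein distance (unit costs) between `L` and the length-`m`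
string with a single one at position `n` is at least `L.count true`. -/
theorem levenshtein_single_one_of_false (m n : ℕ) (L : List Bool)
    (hL : L.length = m) (hn : n < m)
    (h : L.get ⟨n, by omega⟩ = false) :
    L.count true ≤
      levenshtein Levenshtein.defaultCost L
        (List.replicate n false ++ [true] ++ List.replicate (m - 1 - n) false) := by
  have hget : L[n]? = some false := by
    rw [List.getElem?_eq_getElem (show n < L.length by omega)]
    exact congrArg some h
  have := lemB L n (m - 1 - n) (by omega) hget
  simpa [List.append_assoc] using this
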